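/- Let α < β be real numbers and w ∈ ℂ. Let A = [[β, 0],[0, α]] and B = [[β, w],[conj(w), α]] be 2×2 Hermitian matrices. Let P be the orthogonal projection onto the eigenspace of A for the eigenvalue α, and Q the orthogonal projection onto the eigenspace of B for its smaller eigenvalue. Then ‖P - Q‖ = sin((1/2) arctan(2|w|/(β - α))). -/

import Mathlib

open scoped Matrix.Norms.L2Operator

set_option maxHeartbeats 1000000 in
/-- For `A = [[β,0],[0,α]]`, `B = [[β,w],[conj w, α]]` with `α < β`, the orthogonal projection
`P = diag(0,1)` onto the `α`-eigenspace of `A` and the orthogonal projection `Q` onto the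
eigenspace of `B` for its smaller eigenvalue `(α+β)/2 - √((β-α)²/4 + |w|²)` satisfy
`‖P - Q‖ = sin((1/2) arctan(2|w|/(β - α)))` in the operator norm on `ℂ²`. -/
theorem two_by_two_tan_two_theta (α β : ℝ) (hαβ : α < β) (w : ℂ)
    (B : Matrix (Fin 2) (Fin 2) ℂ)
    (hB : B = !![(β : ℂ), w; (starRingEnd ℂ) w, (α : ℂ)])
    (Q : Matrix (Fin 2) (Fin 2) ℂ)
    (hQherm : Q.IsHermitian) (hQidem : Q * Q = Q) (hQtr : Q.trace = 1)
    (hQeig : B * Q =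
      (((α + β) / 2 - Real.sqrt ((β - α) ^ 2 / 4 + ‖w‖ ^ 2) : ℝ) : ℂ) • Q) :
    ‖(!![(0 : ℂ), 0; 0, 1] : Matrix (Fin 2) (Fin 2) ℂ) - Q‖ =
      Real.sin ((1 / 2) * Real.arctan (2 * ‖w‖ / (β - α))) := by
  subst hB
  set t : ℝ := ‖w‖ with ht
  set d : ℝ := β - α with hdd
  have hd0 : 0 < d := sub_pos.2 hαβ
  set s : ℝ := Real.sqrt ((β - α) ^ 2 / 4 + t ^ 2) with hs
  have hs2 : s ^ 2 = d ^ 2 / 4 + t ^ 2 := by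
    rw [hs, hdd, Real.sq_sqrt (by positivity)]
  have ht0 : 0 ≤ t := norm_nonneg w
  have hs0 : 0 < s := by
    rw [hs]; apply Real.sqrt_pos.2; nlinarith
  set lam : ℝ := (α + β) / 2 - s with hlam
  have hbl : β - lam = d / 2 + s := by rw [hlam, hdd]; ring
  -- entrywise equations
  have e00 := congrFun (congrFun hQeig 0) 0
  have e01 := congrFun (congrFun hQeig 0) 1
  simp only [Matrix.mul_apply, Fin.sum_univ_two, Matrix.smul_apply, Matrix.cons_val',
    Matrix.cons_val_zero, Matrix.cons_val_one, Matrix.head_cons, Matrix.head_fin_const,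
    Matrix.of_apply, Matrix.empty_val', Matrix.cons_val_fin_one, smul_eq_mul] at e00 e01
  have h10 : star (Q 1 0) = Q 0 1 := hQherm.apply 0 1
  have h11 : star (Q 1 1) = Q 1 1 := hQherm.apply 1 1
  have h01 : (starRingEnd ℂ) (Q 0 1) = Q 1 0 := by rw [← h10]; exact star_star _
  have htr : Q 0 0 + Q 1 1 = 1 := by simpa [Matrix.trace_fin_two] using hQtr
  have i00 := congrFun (congrFun hQidem 0) 0
  simp only [Matrix.mul_apply, Fin.sum_univ_two] at i00
  have hw : ((t : ℂ)) ^ 2 = w * (starRingEnd ℂ) w := by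
    rw [Complex.mul_conj, Complex.normSq_eq_norm_sq, ht]; push_cast; ring
  have estar := congrArg star e01
  simp only [star_add, star_mul', h11, Complex.star_def, Complex.conj_ofReal,
    Complex.conj_conj, h01] at estar
  have f0 : w * Q 1 0 = ((lam : ℂ) - β) * Q 0 0 := by linear_combination e00
  have f1 : (starRingEnd ℂ) w * Q 1 1 = ((lam : ℂ) - β) * Q 1 0 := by linear_combination estar
  have f2 : ((t : ℂ)) ^ 2 * Q 1 1 = ((β : ℂ) - lam) ^ 2 * Q 0 0 := by
    linear_combination w * f1 + ((lam : ℂ) - β) * f0 + Q 1 1 * hw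
  set aR : ℝ := t ^ 2 / ((β - lam) ^ 2 + t ^ 2) with haR
  have hden : 0 < (β - lam) ^ 2 + t ^ 2 := by rw [hbl]; positivity
  have hdenC : (((β : ℂ) - lam) ^ 2 + (t : ℂ) ^ 2) ≠ 0 := by
    exact_mod_cast hden.ne'
  have hQ00 : Q 0 0 = (aR : ℂ) := by
    rw [haR]; push_cast
    rw [eq_div_iff hdenC]
    linear_combination (t : ℂ) ^ 2 * htr - f2
  have haR0 : 0 ≤ aR := by positivity
  -- matrix square
  have hM : ((!![(0 : ℂ), 0; 0, 1] : Matrix (Fin 2) (Fin 2) ℂ) - Q) *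
      ((!![(0 : ℂ), 0; 0, 1] : Matrix (Fin 2) (Fin 2) ℂ) - Q) = ((aR : ℝ) : ℂ) • 1 := by
    ext i j
    fin_cases i <;> fin_cases j <;>
      simp only [Matrix.mul_apply, Fin.sum_univ_two, Matrix.sub_apply, Matrix.smul_apply,
        Matrix.one_apply, Matrix.cons_val', Matrix.cons_val_zero, Matrix.cons_val_one,
        Matrix.head_cons, Matrix.of_apply, Matrix.empty_val', Matrix.cons_val_fin_one,
        Matrix.head_fin_const, smul_eq_mul, Fin.mk_zero, Fin.mk_one, ne_eq, if_true,
        one_ne_zero, zero_ne_one, if_false, mul_one, mul_zero]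
    · linear_combination i00 + hQ00
    · linear_combination Q 0 1 * htr
    · linear_combination Q 1 0 * htr
    · linear_combination i00 + hQ00 - (1 - Q 1 1 + Q 0 0) * htr
  -- hermitian of P - Q
  have hherm : Matrix.conjTranspose
      ((!![(0 : ℂ), 0; 0, 1] : Matrix (Fin 2) (Fin 2) ℂ) - Q) =
      (!![(0 : ℂ), 0; 0, 1] : Matrix (Fin 2) (Fin 2) ℂ) - Q := by
    rw [Matrix.conjTranspose_sub, hQherm.eq]
    congr 1
    ext i j
    fin_cases i <;> fin_cases j <;> simp [Matrix.conjTranspose_apply]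
  have hnn : ‖(!![(0 : ℂ), 0; 0, 1] : Matrix (Fin 2) (Fin 2) ℂ) - Q‖ *
      ‖(!![(0 : ℂ), 0; 0, 1] : Matrix (Fin 2) (Fin 2) ℂ) - Q‖ = aR := by
    rw [← Matrix.l2_opNorm_conjTranspose_mul_self, hherm, hM, norm_smul, norm_one, mul_one]
    simpa using abs_of_nonneg haR0
  have hnorm : ‖(!![(0 : ℂ), 0; 0, 1] : Matrix (Fin 2) (Fin 2) ℂ) - Q‖ = Real.sqrt aR := by
    rw [← hnn, Real.sqrt_mul_self (norm_nonneg _)]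
  rw [hnorm]
  -- trig side
  rw [show (1 / 2 : ℝ) * Real.arctan (2 * t / (β - α)) =
      Real.arctan (2 * t / d) / 2 by rw [← hdd]; ring]
  have harc0 : 0 ≤ Real.arctan (2 * t / d) := by
    rw [← Real.arctan_zero]
    exact Real.arctan_strictMono.monotone (by positivity)
  rw [Real.sin_half_eq_sqrt harc0
    ((Real.arctan_lt_pi_div_two _).le.trans (by linarith [Real.pi_pos]))]
  congr 1
  rw [Real.cos_arctan]
  have h2s : Real.sqrt (1 + (2 * t / d) ^ 2) = 2 * s / d := by
    rw [show 1 + (2 * t / d) ^ 2 = (2 * s / d) ^ 2 by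
      field_simp
      nlinarith [hs2]]
    exact Real.sqrt_sq (by positivity)
  rw [h2s, haR, hbl]
  field_simp
  linear_combination (-(8*s+4*d)) * hs2
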